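/- Suppose for all k, s^k − p = λ_k (s¹ − p) for a fixed point p ∈ ℝ³ and positive scalars λ_k (all source positions collinear with the array position p). Then the stacked matrix M_U = [U¹; U²; …; U^K], where U^k = −Rᵀ(1/(d^k)³)((d^k)² I₃ − v^k (v^k)ᵀ) with v^k = s^k − p and d^k = ‖v^k‖, has rank at most 2, hence is not of full column rank. -/

import Mathlib

open Matrix

/-- The matrix `A(v) = (1/d³)(d² I₃ − v vᵀ)` appearing in the DOA Jacobian, `d = ‖v‖`. -/
noncomputable def Amat (v : EuclideanSpace ℝ (Fin 3)) : Matrix (Fin 3) (Fin 3) ℝ :=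
  (1 / ‖v‖ ^ 3) • (‖v‖ ^ 2 • (1 : Matrix (Fin 3) (Fin 3) ℝ)
    - Matrix.of fun i j => v i * v j)

lemma Amat_smul (c : ℝ) (hc : 0 < c) (v : EuclideanSpace ℝ (Fin 3)) :
    Amat (c • v) = c⁻¹ • Amat v := by
  have hn : ‖c • v‖ = c * ‖v‖ := by
    rw [norm_smul, Real.norm_eq_abs, abs_of_pos hc]
  ext i j
  simp only [Amat, hn, Matrix.smul_apply, Matrix.sub_apply, Matrix.of_apply,
    PiLp.smul_apply, smul_eq_mul, Matrix.one_apply]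
  have hc' : c ≠ 0 := hc.ne'
  rcases eq_or_ne ‖v‖ 0 with h | h
  · simp [h]
  · field_simp

lemma Amat_rank_le (v : EuclideanSpace ℝ (Fin 3)) (hv : v ≠ 0) : (Amat v).rank ≤ 2 := by
  have hd : ‖v‖ ≠ 0 := norm_ne_zero_iff.mpr hv
  have hsq : ‖v‖ ^ 2 = ∑ i, v i ^ 2 := by
    rw [EuclideanSpace.norm_eq]
    rw [Real.sq_sqrt (by positivity)]
    simp [sq]
  have hker : (Amat v).mulVecLin (fun i => v i) = 0 := by
    ext i
    have hA : ∀ j, Amat v i j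
        = (1 / ‖v‖ ^ 3) * ‖v‖ ^ 2 * (if i = j then 1 else 0)
          - (1 / ‖v‖ ^ 3) * (v i * v j) := by
      intro j
      simp [Amat, Matrix.one_apply]
      split <;> ring
    show ∑ j, Amat v i j * v j = 0
    have h1 : ∀ j, Amat v i j * v j
        = (1 / ‖v‖ ^ 3) * ‖v‖ ^ 2 * (if i = j then v j else 0)
          - (1 / ‖v‖ ^ 3) * v i * v j ^ 2 := by
      intro j; rw [hA]; split <;> ring
    rw [Finset.sum_congr rfl (fun j _ => h1 j), Finset.sum_sub_distrib]
    simp only [mul_ite, mul_zero, Finset.sum_ite_eq, Finset.mem_univ, if_true]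
    have h2 : ∑ x : Fin 3, 1 / ‖v‖ ^ 3 * v i * v x ^ 2
        = 1 / ‖v‖ ^ 3 * v i * ‖v‖ ^ 2 := by
      rw [← Finset.mul_sum, ← hsq]
    rw [h2]
    field_simp
    ring
  have hne : (fun i => v i : Fin 3 → ℝ) ≠ 0 := by
    intro h
    apply hv
    ext i
    exact congrFun h i
  have hkpos : 0 < Module.finrank ℝ (LinearMap.ker (Amat v).mulVecLin) := by
    rw [Module.finrank_pos_iff_exists_ne_zero]
    exact ⟨⟨_, LinearMap.mem_ker.mpr hker⟩, by simpa using hne⟩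
  have := LinearMap.finrank_range_add_finrank_ker (Amat v).mulVecLin
  rw [Module.finrank_pi] at this
  simp only [Fintype.card_fin] at this
  have : (Amat v).rank + Module.finrank ℝ (LinearMap.ker (Amat v).mulVecLin) = 3 := this
  omega

/-- Theorem 5(i): if all source positions are collinear with the array position `p`
(`s^k − p = λ_k (s¹ − p)`, `λ_k > 0`), then the stacked matrix
`M_U = [U¹; …; U^K]` with `U^k = -Rᵀ A(s^k − p)` has rank at most `2`,
hence is not of full column rank. -/
theorem MU_not_full_column_rank_of_collinear (K : ℕ) (hK : 1 ≤ K)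
    (R : Matrix (Fin 3) (Fin 3) ℝ) (hR : R * Rᵀ = 1) (hdet : R.det = 1)
    (p : EuclideanSpace ℝ (Fin 3)) (s : Fin K → EuclideanSpace ℝ (Fin 3))
    (hs : ∀ k, s k ≠ p)
    (lam : Fin K → ℝ) (hlam : ∀ k, 0 < lam k)
    (hcol : ∀ k, s k - p = lam k • (s ⟨0, hK⟩ - p)) :
    (Matrix.of (fun (r : Fin K × Fin 3) (j : Fin 3) =>
        (-(Rᵀ) * Amat (s r.1 - p)) r.2 j)).rank ≤ 2 := by
  set v1 : EuclideanSpace ℝ (Fin 3) := s ⟨0, hK⟩ - p with hv1def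
  have hv1 : v1 ≠ 0 := sub_ne_zero.mpr (hs _)
  set B : Matrix (Fin 3) (Fin 3) ℝ := -(Rᵀ) * Amat v1 with hB
  set C : Matrix (Fin K × Fin 3) (Fin 3) ℝ :=
    Matrix.of (fun r l => (lam r.1)⁻¹ * (if r.2 = l then 1 else 0)) with hC
  have hM : (Matrix.of (fun (r : Fin K × Fin 3) (j : Fin 3) =>
      (-(Rᵀ) * Amat (s r.1 - p)) r.2 j)) = C * B := by
    ext r j
    have h1 : Amat (s r.1 - p) = (lam r.1)⁻¹ • Amat v1 := by
      rw [hcol r.1, Amat_smul _ (hlam r.1)]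
    simp only [Matrix.of_apply, h1, Matrix.mul_apply, hC, hB, Matrix.smul_apply,
      smul_eq_mul, Matrix.mul_apply]
    show ∑ x, (-(Rᵀ)) r.2 x * ((lam r.1)⁻¹ * Amat v1 x j)
        = ∑ x, ((lam r.1)⁻¹ * if r.2 = x then 1 else 0)
            * ∑ m, (-(Rᵀ)) x m * Amat v1 m j
    symm
    rw [Finset.sum_congr rfl (fun x _ =>
      show ((lam r.1)⁻¹ * if r.2 = x then 1 else 0) * ∑ m, (-(Rᵀ)) x m * Amat v1 m j
          = if r.2 = x then (lam r.1)⁻¹ * ∑ m, (-(Rᵀ)) x m * Amat v1 m j else 0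
        from by split <;> ring), Finset.sum_ite_eq]
    simp only [Finset.mem_univ, if_true]
    rw [Finset.mul_sum]
    exact Finset.sum_congr rfl fun x _ => by ring
  rw [hM]
  calc (C * B).rank ≤ B.rank := Matrix.rank_mul_le_right C B
    _ ≤ (Amat v1).rank := Matrix.rank_mul_le_right _ _
    _ ≤ 2 := Amat_rank_le v1 hv1
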